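/- For every n ≥ 0, the number a_{n+2} of Dyck arches ending with a catastrophe of length n+2 equals binomial(n, ⌊n/2⌋) minus, when n is even, the Catalan number Catalan(n/2) (and minus 0 when n is odd). -/

import Mathlib

/-- Validity of a path with catastrophes over the jump set `J`, starting from
altitude `h`: each step is either a jump `s ∈ J` keeping the altitude
nonnegative, or a catastrophe `s = -h` from an altitude `h > 0` with `-h ∉ J`
(landing at altitude `0`). -/
def CatValidFrom (J : Finset ℤ) : ℤ → List ℤ → Prop
  | _, [] => True
  | h, s :: r =>
    ((s ∈ J ∧ 0 ≤ h + s) ∨ (s = -h ∧ 0 < h ∧ -h ∉ J)) ∧ CatValidFrom J (h + s) r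

/-- The jump set of Dyck paths. For this jump set a catastrophe is a jump
`-h` from an altitude `h ≥ 2` to altitude `0`. -/
def dyckJ : Finset ℤ := {-1, 1}

/-- `l` is a Dyck path with catastrophes of length `n`. -/
def DyckCat (n : ℕ) (l : List ℤ) : Prop :=
  l.length = n ∧ CatValidFrom dyckJ 0 l ∧ l.sum = 0

/-- The arch condition for a path of length `n`: the altitude after step `i`
is strictly positive for all `1 ≤ i < n`. -/
def IsArch (n : ℕ) (l : List ℤ) : Prop :=
  ∀ i : ℕ, 1 ≤ i → i < n → 0 < (l.take i).sum

/-- The last step of `l` (a path starting at altitude `0`) is a catastrophe. -/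
def EndsWithCat (J : Finset ℤ) (l : List ℤ) : Prop :=
  ∃ l' : List ℤ, l = l' ++ [-l'.sum] ∧ 0 < l'.sum ∧ -l'.sum ∉ J

/-- The number `a n` of Dyck arches ending with a catastrophe of length `n`. -/
noncomputable def aCount (n : ℕ) : ℕ :=
  Nat.card {l : List ℤ // DyckCat n l ∧ IsArch n l ∧ EndsWithCat dyckJ l}


/-- entries are ±1 -/
def IsPM (m : List ℤ) : Prop := ∀ x ∈ m, x = 1 ∨ x = -1

/-- all prefix sums nonnegative -/
def NNP (m : List ℤ) : Prop := ∀ i : ℕ, 0 ≤ (m.take i).sum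

noncomputable def Nk (n : ℕ) (k : ℤ) : ℕ :=
  Nat.card {m : List ℤ // (IsPM m ∧ NNP m) ∧ m.length = n ∧ m.sum = k}

noncomputable def Mcnt (n : ℕ) : ℕ :=
  Nat.card {m : List ℤ // (IsPM m ∧ NNP m) ∧ m.length = n}

noncomputable def Tcnt (n : ℕ) : ℕ :=
  Nat.card {m : List ℤ // (IsPM m ∧ NNP m) ∧ m.length = n ∧ 1 ≤ m.sum}

lemma finite_pm (n : ℕ) : {m : List ℤ | IsPM m ∧ m.length = n}.Finite := by
  induction n with
  | zero =>
    apply Set.Finite.subset (Set.finite_singleton ([] : List ℤ))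
    rintro m ⟨-, hl⟩
    simp_all [List.length_eq_zero_iff]
  | succ n ih =>
    apply Set.Finite.subset (Set.Finite.image (fun p : ℤ × List ℤ => p.1 :: p.2)
      (Set.Finite.prod (Set.toFinite ({1, -1} : Set ℤ)) ih))
    rintro m ⟨hpm, hl⟩
    have hne : m ≠ [] := by
      intro h; rw [h] at hl; simp at hl
    obtain ⟨a, t, rfl⟩ := List.exists_cons_of_ne_nil hne
    refine ⟨(a, t), ⟨?_, fun x hx => hpm x (List.mem_cons_of_mem a hx), by simpa using hl⟩, rfl⟩
    rcases hpm a List.mem_cons_self with h | h <;> simp [h]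

lemma finite_aux (n : ℕ) (Q : List ℤ → Prop) :
    Finite {m : List ℤ // (IsPM m ∧ NNP m) ∧ m.length = n ∧ Q m} :=
  Set.Finite.to_subtype ((finite_pm n).subset
    (fun m hm => ⟨hm.1.1, hm.2.1⟩))

lemma finite_aux' (n : ℕ) :
    Finite {m : List ℤ // (IsPM m ∧ NNP m) ∧ m.length = n} :=
  Set.Finite.to_subtype ((finite_pm n).subset
    (fun m hm => ⟨hm.1.1, hm.2⟩))

lemma nnp_concat (m : List ℤ) (s : ℤ) :
    NNP (m ++ [s]) ↔ NNP m ∧ 0 ≤ m.sum + s := by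
  constructor
  · intro h
    refine ⟨fun i => ?_, ?_⟩
    · rcases le_or_gt i m.length with hi | hi
      · have := h i
        rwa [List.take_append_of_le_length hi] at this
      · rw [List.take_of_length_le hi.le]
        have := h m.length
        rwa [List.take_append_of_le_length le_rfl, List.take_of_length_le le_rfl] at this
    · have := h (m.length + 1)
      rw [List.take_of_length_le (by simp)] at this
      simpa using this
  · rintro ⟨h1, h2⟩ i
    rcases le_or_gt i m.length with hi | hi
    · rw [List.take_append_of_le_length hi]; exact h1 i
    · rw [List.take_of_length_le (by simp; omega)]
      simpa using h2

/-- sum of a nonneg-prefix list is nonneg -/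
lemma nnp_sum_nonneg {m : List ℤ} (h : NNP m) : 0 ≤ m.sum := by
  have := h m.length
  rwa [List.take_of_length_le le_rfl] at this

lemma ispm_concat (m : List ℤ) (s : ℤ) :
    IsPM (m ++ [s]) ↔ IsPM m ∧ (s = 1 ∨ s = -1) := by
  constructor
  · intro h
    exact ⟨fun x hx => h x (by simp [hx]), h s (by simp)⟩
  · rintro ⟨h1, h2⟩ x hx
    rcases List.mem_append.1 hx with h | h
    · exact h1 x h
    · simp at h; subst h; exact h2

/-- structure of nonempty meanders with given sum, by last step -/
lemma mea_concat (n : ℕ) (k : ℤ) (m : List ℤ) :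
    ((IsPM m ∧ NNP m) ∧ m.length = n + 1 ∧ m.sum = k) ↔
    ((∃ m', ((IsPM m' ∧ NNP m') ∧ m'.length = n ∧ m'.sum = k - 1) ∧ 0 ≤ k ∧ m = m' ++ [1]) ∨
     (∃ m', ((IsPM m' ∧ NNP m') ∧ m'.length = n ∧ m'.sum = k + 1) ∧ 0 ≤ k ∧ m = m' ++ [-1])) := by
  constructor
  · rintro ⟨⟨hpm, hnn⟩, hlen, hsum⟩
    have hne : m ≠ [] := by intro h; rw [h] at hlen; simp at hlen
    obtain ⟨m', s, rfl⟩ := (List.eq_nil_or_concat m).resolve_left hne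
    simp only [List.concat_eq_append] at *
    rw [ispm_concat] at hpm
    rw [nnp_concat] at hnn
    have hs : m'.sum + s = k := by simpa using hsum
    have hl : m'.length = n := by simpa using hlen
    rcases hpm.2 with h | h
    · left
      exact ⟨m', ⟨⟨hpm.1, hnn.1⟩, hl, by omega⟩, by omega, by rw [h]⟩
    · right
      exact ⟨m', ⟨⟨hpm.1, hnn.1⟩, hl, by omega⟩, by omega, by rw [h]⟩
  · rintro (⟨m', ⟨⟨hpm, hnn⟩, hl, hs⟩, hk, rfl⟩ | ⟨m', ⟨⟨hpm, hnn⟩, hl, hs⟩, hk, rfl⟩) <;>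
      exact ⟨⟨(ispm_concat _ _).2 ⟨hpm, by simp⟩, (nnp_concat _ _).2 ⟨hnn, by omega⟩⟩,
        by simp [hl], by simp; omega⟩

lemma Nk_neg (n : ℕ) {k : ℤ} (hk : k < 0) : Nk n k = 0 := by
  rw [Nk, Nat.card_eq_zero]
  left
  constructor
  rintro ⟨m, ⟨-, hnn⟩, -, hsum⟩
  have := nnp_sum_nonneg hnn
  omega

lemma Nk_succ (n : ℕ) (k : ℤ) (hk : 0 ≤ k) :
    Nk (n + 1) k = Nk n (k - 1) + Nk n (k + 1) := by
  have i1 := finite_aux n (fun m => m.sum = k - 1)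
  have i2 := finite_aux n (fun m => m.sum = k + 1)
  have e : ({m : List ℤ // (IsPM m ∧ NNP m) ∧ m.length = n ∧ m.sum = k - 1} ⊕
      {m : List ℤ // (IsPM m ∧ NNP m) ∧ m.length = n ∧ m.sum = k + 1}) ≃
      {m : List ℤ // (IsPM m ∧ NNP m) ∧ m.length = n + 1 ∧ m.sum = k} := by
    apply Equiv.ofBijective (Sum.elim
      (fun x => ⟨x.1 ++ [1], (mea_concat n k _).2 (Or.inl ⟨x.1, x.2, hk, rfl⟩)⟩)
      (fun x => ⟨x.1 ++ [-1], (mea_concat n k _).2 (Or.inr ⟨x.1, x.2, hk, rfl⟩)⟩))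
    constructor
    · rintro (x | x) (y | y) h <;> simp only [Sum.elim_inl, Sum.elim_inr, Subtype.mk_eq_mk] at h
      · congr 1
        exact Subtype.ext (by simpa using congrArg List.dropLast h)
      · exfalso
        have := congrArg List.getLast? h
        simp [List.getLast?_concat] at this
      · exfalso
        have := congrArg List.getLast? h
        simp [List.getLast?_concat] at this
      · congr 1
        exact Subtype.ext (by simpa using congrArg List.dropLast h)
    · rintro ⟨m, hm⟩
      rcases (mea_concat n k m).1 hm with ⟨m', hm', -, rfl⟩ | ⟨m', hm', -, rfl⟩
      · exact ⟨Sum.inl ⟨m', hm'⟩, rfl⟩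
      · exact ⟨Sum.inr ⟨m', hm'⟩, rfl⟩
  rw [Nk, ← Nat.card_congr e, Nat.card_sum]
  rfl

lemma mea_concat' (n : ℕ) (m : List ℤ) :
    ((IsPM m ∧ NNP m) ∧ m.length = n + 1) ↔
    ((∃ m', ((IsPM m' ∧ NNP m') ∧ m'.length = n) ∧ m = m' ++ [1]) ∨
     (∃ m', ((IsPM m' ∧ NNP m') ∧ m'.length = n ∧ 1 ≤ m'.sum) ∧ m = m' ++ [-1])) := by
  constructor
  · rintro ⟨⟨hpm, hnn⟩, hlen⟩
    have hne : m ≠ [] := by intro h; rw [h] at hlen; simp at hlen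
    obtain ⟨m', s, rfl⟩ := (List.eq_nil_or_concat m).resolve_left hne
    simp only [List.concat_eq_append] at *
    rw [ispm_concat] at hpm
    rw [nnp_concat] at hnn
    have hl : m'.length = n := by simpa using hlen
    rcases hpm.2 with h | h
    · left
      exact ⟨m', ⟨⟨hpm.1, hnn.1⟩, hl⟩, by rw [h]⟩
    · right
      subst h
      exact ⟨m', ⟨⟨hpm.1, hnn.1⟩, hl, by have := hnn.2; omega⟩, rfl⟩
  · rintro (⟨m', ⟨⟨hpm, hnn⟩, hl⟩, rfl⟩ | ⟨m', ⟨⟨hpm, hnn⟩, hl, hs⟩, rfl⟩)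
    · exact ⟨⟨(ispm_concat _ _).2 ⟨hpm, by simp⟩,
        (nnp_concat _ _).2 ⟨hnn, by have := nnp_sum_nonneg hnn; omega⟩⟩, by simp [hl]⟩
    · exact ⟨⟨(ispm_concat _ _).2 ⟨hpm, by simp⟩,
        (nnp_concat _ _).2 ⟨hnn, by omega⟩⟩, by simp [hl]⟩

lemma Mcnt_succ (n : ℕ) : Mcnt (n + 1) = Mcnt n + Tcnt n := by
  have i1 := finite_aux' n
  have i2 := finite_aux n (fun m => 1 ≤ m.sum)
  have e : ({m : List ℤ // (IsPM m ∧ NNP m) ∧ m.length = n} ⊕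
      {m : List ℤ // (IsPM m ∧ NNP m) ∧ m.length = n ∧ 1 ≤ m.sum}) ≃
      {m : List ℤ // (IsPM m ∧ NNP m) ∧ m.length = n + 1} := by
    apply Equiv.ofBijective (Sum.elim
      (fun x => ⟨x.1 ++ [1], (mea_concat' n _).2 (Or.inl ⟨x.1, x.2, rfl⟩)⟩)
      (fun x => ⟨x.1 ++ [-1], (mea_concat' n _).2 (Or.inr ⟨x.1, x.2, rfl⟩)⟩))
    constructor
    · rintro (x | x) (y | y) h <;> simp only [Sum.elim_inl, Sum.elim_inr, Subtype.mk_eq_mk] at h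
      · congr 1
        exact Subtype.ext (by simpa using congrArg List.dropLast h)
      · exfalso
        have := congrArg List.getLast? h
        simp [List.getLast?_concat] at this
      · exfalso
        have := congrArg List.getLast? h
        simp [List.getLast?_concat] at this
      · congr 1
        exact Subtype.ext (by simpa using congrArg List.dropLast h)
    · rintro ⟨m, hm⟩
      rcases (mea_concat' n m).1 hm with ⟨m', hm', rfl⟩ | ⟨m', hm', rfl⟩
      · exact ⟨Sum.inl ⟨m', hm'⟩, rfl⟩
      · exact ⟨Sum.inr ⟨m', hm'⟩, rfl⟩
  rw [Mcnt, ← Nat.card_congr e, Nat.card_sum]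
  rfl

lemma Mcnt_split (n : ℕ) : Mcnt n = Nk n 0 + Tcnt n := by
  have i1 := finite_aux n (fun m => m.sum = 0)
  have i2 := finite_aux n (fun m => 1 ≤ m.sum)
  have e : ({m : List ℤ // (IsPM m ∧ NNP m) ∧ m.length = n ∧ m.sum = 0} ⊕
      {m : List ℤ // (IsPM m ∧ NNP m) ∧ m.length = n ∧ 1 ≤ m.sum}) ≃
      {m : List ℤ // (IsPM m ∧ NNP m) ∧ m.length = n} := by
    apply Equiv.ofBijective (Sum.elim
      (fun x => ⟨x.1, x.2.1, x.2.2.1⟩) (fun x => ⟨x.1, x.2.1, x.2.2.1⟩))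
    constructor
    · rintro (x | x) (y | y) h <;> simp only [Sum.elim_inl, Sum.elim_inr, Subtype.mk_eq_mk] at h
      · congr 1; exact Subtype.ext h
      · exfalso
        have h1 := x.2.2.2; have h2 := y.2.2.2; rw [h] at h1; omega
      · exfalso
        have h1 := x.2.2.2; have h2 := y.2.2.2; rw [h] at h1; omega
      · congr 1; exact Subtype.ext h
    · rintro ⟨m, hm⟩
      have h0 : 0 ≤ m.sum := nnp_sum_nonneg hm.1.2
      rcases eq_or_lt_of_le h0 with h | h
      · exact ⟨Sum.inl ⟨m, hm.1, hm.2, h.symm⟩, rfl⟩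
      · exact ⟨Sum.inr ⟨m, hm.1, hm.2, h⟩, rfl⟩
  rw [Mcnt, ← Nat.card_congr e, Nat.card_sum]
  rfl

lemma Nk_zero (k : ℤ) : Nk 0 k = if k = 0 then 1 else 0 := by
  split
  · subst k
    rw [Nk, Nat.card_eq_one_iff_unique]
    constructor
    · constructor
      rintro ⟨m, ⟨-, hl, -⟩⟩ ⟨m', ⟨-, hl', -⟩⟩
      apply Subtype.ext
      rw [List.length_eq_zero_iff] at hl hl'
      simp only [hl, hl']
    · exact ⟨⟨[], ⟨by intro x hx; simp at hx, fun i => by simp⟩, by simp, by simp⟩⟩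
  · rw [Nk, Nat.card_eq_zero]
    left
    constructor
    rintro ⟨m, -, hl, hs⟩
    rw [List.length_eq_zero_iff] at hl
    subst hl
    simp at hs
    omega

lemma Mcnt_zero : Mcnt 0 = 1 := by
  rw [Mcnt, Nat.card_eq_one_iff_unique]
  constructor
  · constructor
    rintro ⟨m, ⟨-, hl⟩⟩ ⟨m', ⟨-, hl'⟩⟩
    apply Subtype.ext
    rw [List.length_eq_zero_iff] at hl hl'
    simp only [hl, hl']
  · exact ⟨⟨[], ⟨by intro x hx; simp at hx, fun i => by simp⟩, by simp⟩⟩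

/-- ballot numbers: number of meanders of length `n` ending at altitude `k` -/
noncomputable def bal (n : ℕ) (k : ℤ) : ℤ :=
  if 0 ≤ (n : ℤ) + k ∧ ((n : ℤ) + k) % 2 = 0 then
    (n.choose (((n : ℤ) + k).toNat / 2) : ℤ) - n.choose (((n : ℤ) + k).toNat / 2 + 1)
  else 0

lemma bal_neg_one (n : ℕ) : bal n (-1) = 0 := by
  rw [bal]
  split
  · next hg =>
    obtain ⟨h0, h2⟩ := hg
    obtain ⟨j, hj⟩ : ∃ j : ℕ, (n : ℤ) + (-1) = 2 * j := by
      have := Int.emod_emod_of_dvd ((n:ℤ) + (-1)) (dvd_refl 2)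
      obtain ⟨c, hc⟩ := Int.dvd_of_emod_eq_zero h2
      exact ⟨c.toNat, by omega⟩
    have hn : n = 2 * j + 1 := by omega
    have ht : ((n : ℤ) + (-1)).toNat / 2 = j := by omega
    rw [ht, hn]
    have : (2 * j + 1).choose (2 * j + 1 - (j + 1)) = (2 * j + 1).choose (j + 1) :=
      Nat.choose_symm (by omega)
    have hjj : 2 * j + 1 - (j + 1) = j := by omega
    rw [hjj] at this
    rw [this]
    ring
  · rfl

lemma bal_pascal (n : ℕ) (k : ℤ) (hk : 0 ≤ k) :
    bal (n + 1) k = bal n (k - 1) + bal n (k + 1) := by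
  rcases Int.even_or_odd ((n : ℤ) + 1 + k) with he | ho
  · obtain ⟨j', hj'⟩ := he
    obtain ⟨j, hjj⟩ : ∃ j : ℕ, (n : ℤ) + 1 + k = 2 * j ∧ 1 ≤ j := ⟨j'.toNat, by omega⟩
    obtain ⟨hj, hj1⟩ := hjj
    rw [bal, bal, bal]
    rw [if_pos ⟨by push_cast; omega, by push_cast; omega⟩,
        if_pos ⟨by omega, by omega⟩, if_pos ⟨by omega, by omega⟩]
    have e1 : (((n : ℕ) + 1 : ℕ) : ℤ) + k = (n : ℤ) + 1 + k := by push_cast; ring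
    have e2 : ((((n : ℕ) + 1 : ℕ) : ℤ) + k).toNat / 2 = j := by omega
    have e3 : ((n : ℤ) + (k - 1)).toNat / 2 = j - 1 := by omega
    have e4 : ((n : ℤ) + (k + 1)).toNat / 2 = j := by omega
    rw [e2, e3, e4]
    obtain ⟨i, rfl⟩ : ∃ i : ℕ, j = i + 1 := ⟨j - 1, by omega⟩
    have p1 : (n + 1).choose (i + 1) = n.choose i + n.choose (i + 1) :=
      Nat.choose_succ_succ' n i
    have p2 : (n + 1).choose (i + 1 + 1) = n.choose (i + 1) + n.choose (i + 1 + 1) :=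
      Nat.choose_succ_succ' n (i + 1)
    have e5 : i + 1 - 1 = i := rfl
    rw [e5, p1, p2]
    push_cast
    ring
  · obtain ⟨j, hj⟩ := ho
    rw [bal, bal, bal, if_neg, if_neg, if_neg]
    · simp
    all_goals
      rintro ⟨h0, h2⟩
      push_cast at h0 h2 ⊢
      omega

lemma Nk_eq_bal : ∀ (n : ℕ) (k : ℤ), 0 ≤ k → (Nk n k : ℤ) = bal n k := by
  intro n
  induction n with
  | zero =>
    intro k hk
    rw [Nk_zero, bal]
    simp only [Nat.cast_zero, zero_add]
    rcases eq_or_lt_of_le hk with h | h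
    · obtain rfl : k = 0 := h.symm
      norm_num
    · rw [if_neg (by omega)]
      split
      · next hg =>
        have hdvd : 1 ≤ k.toNat / 2 := by omega
        rw [Nat.choose_eq_zero_of_lt (by omega), Nat.choose_eq_zero_of_lt (by omega)]
        simp
      · rfl
  | succ n ih =>
    intro k hk
    rw [Nk_succ n k hk, bal_pascal n k hk]
    push_cast
    rcases eq_or_lt_of_le hk with h | h
    · obtain rfl : k = 0 := h.symm
      norm_num
      rw [Nk_neg n (by omega : (-1:ℤ) < 0), bal_neg_one, ih 1 (by omega)]
      simp
    · rw [ih (k - 1) (by omega), ih (k + 1) (by omega)]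

lemma bal_zero (n : ℕ) :
    bal n 0 = if Even n then (n.choose (n / 2) : ℤ) - n.choose (n / 2 + 1) else 0 := by
  rw [bal]
  rcases Nat.even_or_odd n with he | ho
  · obtain ⟨m, rfl⟩ := he
    rw [if_pos ⟨by omega, by omega⟩, if_pos ⟨m, rfl⟩]
    have e : (((m + m : ℕ) : ℤ) + 0).toNat / 2 = (m + m) / 2 := by omega
    rw [e]
  · obtain ⟨m, rfl⟩ := ho
    rw [if_neg (by omega), if_neg (by simp [Nat.even_iff])]

lemma catalan_choose (m : ℕ) :
    (catalan m : ℤ) = ((2 * m).choose m : ℤ) - (2 * m).choose (m + 1) := by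
  have h1 : (m + 1) * catalan m = Nat.centralBinom m := succ_mul_catalan_eq_centralBinom m
  have h2 : Nat.centralBinom m = (2 * m).choose m := rfl
  have h3 : (2 * m).choose (m + 1) * (m + 1) = (2 * m).choose m * (2 * m - m) :=
    Nat.choose_succ_right_eq (2 * m) m
  have h4 : 2 * m - m = m := by omega
  rw [h4] at h3
  have : ((m : ℤ) + 1) * ((catalan m : ℤ)) = ((m : ℤ) + 1) * (((2 * m).choose m : ℤ) - (2 * m).choose (m + 1)) := by
    have := congrArg (fun x : ℕ => (x : ℤ)) h1
    have h3' := congrArg (fun x : ℕ => (x : ℤ)) h3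
    push_cast at this h3' ⊢
    rw [h2] at this
    push_cast at this
    nlinarith [this, h3']
  exact mul_left_cancel₀ (by positivity) this

lemma Mcnt_eq (n : ℕ) : (Mcnt n : ℤ) = n.choose (n / 2) := by
  induction n with
  | zero => simp [Mcnt_zero]
  | succ n ih =>
    have hT : (Tcnt n : ℤ) = (Mcnt n : ℤ) - Nk n 0 := by
      have := Mcnt_split n
      push_cast [this]
      ring
    have : (Mcnt (n + 1) : ℤ) = 2 * (Mcnt n : ℤ) - Nk n 0 := by
      rw [Mcnt_succ]
      push_cast [hT]
      ring
    rw [this, ih, Nk_eq_bal n 0 le_rfl, bal_zero]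
    rcases Nat.even_or_odd n with he | ho
    · obtain ⟨m, rfl⟩ := he
      rw [if_pos ⟨m, rfl⟩]
      have e1 : (m + m) / 2 = m := by omega
      have e2 : (m + m + 1) / 2 = m := by omega
      rw [e1, e2]
      have p : (m + m + 1).choose (m + 1) = (m + m).choose m + (m + m).choose (m + 1) :=
        Nat.choose_succ_succ' (m + m) m
      have sym : (m + m + 1).choose (m + 1) = (m + m + 1).choose m := by
        rw [← Nat.choose_symm (by omega : m + 1 ≤ m + m + 1)]
        congr 1
        omega
      rw [← sym, p]
      push_cast
      ring
    · obtain ⟨m, rfl⟩ := ho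
      rw [if_neg (by simp [Nat.even_iff])]
      have e1 : (2 * m + 1) / 2 = m := by omega
      have e2 : (2 * m + 1 + 1) / 2 = m + 1 := by omega
      rw [e1, e2]
      have p : (2 * m + 1 + 1).choose (m + 1) = (2 * m + 1).choose m + (2 * m + 1).choose (m + 1) :=
        Nat.choose_succ_succ' (2 * m + 1) m
      have sym : (2 * m + 1).choose (m + 1) = (2 * m + 1).choose m := by
        rw [← Nat.choose_symm (by omega : m + 1 ≤ 2 * m + 1)]
        congr 1
        omega
      rw [p, sym]
      push_cast
      ring

lemma Tcnt_eq (n : ℕ) :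
    (Tcnt n : ℤ) = n.choose (n / 2) - (if Even n then (catalan (n / 2) : ℤ) else 0) := by
  have hT : (Tcnt n : ℤ) = (Mcnt n : ℤ) - Nk n 0 := by
    have := Mcnt_split n
    push_cast [this]
    ring
  rw [hT, Mcnt_eq, Nk_eq_bal n 0 le_rfl, bal_zero]
  rcases Nat.even_or_odd n with he | ho
  · obtain ⟨m, rfl⟩ := he
    rw [if_pos ⟨m, rfl⟩, if_pos ⟨m, rfl⟩]
    have e1 : (m + m) / 2 = m := by omega
    rw [e1, catalan_choose m]
    have e2 : 2 * m = m + m := by omega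
    rw [e2]
  · rw [if_neg (by simpa using ho), if_neg (by simpa using ho)]

lemma catValid_append (J : Finset ℤ) (l1 l2 : List ℤ) : ∀ h : ℤ,
    CatValidFrom J h (l1 ++ l2) ↔ CatValidFrom J h l1 ∧ CatValidFrom J (h + l1.sum) l2 := by
  induction l1 with
  | nil => intro h; simp [CatValidFrom]
  | cons s r ih =>
    intro h
    simp only [List.cons_append, CatValidFrom, List.append_eq, List.sum_cons,
      ih (h + s), ← add_assoc]
    tauto

lemma catValid_of_mem (J : Finset ℤ) : ∀ (m : List ℤ) (h : ℤ),
    (∀ x ∈ m, x ∈ J) → (∀ i : ℕ, 0 ≤ h + (m.take i).sum) → CatValidFrom J h m := by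
  intro m
  induction m with
  | nil => intro h _ _; trivial
  | cons s r ih =>
    intro h hmem hp
    refine ⟨Or.inl ⟨hmem s (by simp), by simpa using hp 1⟩, ?_⟩
    apply ih (h + s) (fun x hx => hmem x (by simp [hx]))
    intro i
    have := hp (i + 1)
    simp only [List.take_succ_cons, List.sum_cons] at this
    linarith [this]

lemma steps_mem (J : Finset ℤ) : ∀ (l : List ℤ) (h : ℤ),
    CatValidFrom J h l →
    (∀ i : ℕ, 1 ≤ i → i ≤ l.length → 0 < h + (l.take i).sum) →
    ∀ x ∈ l, x ∈ J := by
  intro l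
  induction l with
  | nil => intro h _ _ x hx; simp at hx
  | cons s r ih =>
    intro h hv hp x hx
    have h1 : 0 < h + s := by simpa using hp 1 le_rfl (by simp)
    have hs : s ∈ J := by
      rcases hv.1 with h' | h'
      · exact h'.1
      · exfalso; omega
    rw [List.mem_cons] at hx
    rcases hx with rfl | hx
    · exact hs
    · apply ih (h + s) hv.2 _ x hx
      intro i hi1 hi2
      have := hp (i + 1) (by omega) (by simpa using by omega)
      simp only [List.take_succ_cons, List.sum_cons] at this
      linarith [this]

lemma arch_iff (n : ℕ) (l : List ℤ) :
    (DyckCat (n + 2) l ∧ IsArch (n + 2) l ∧ EndsWithCat dyckJ l) ↔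
    ∃ m : List ℤ, ((IsPM m ∧ NNP m) ∧ m.length = n ∧ 1 ≤ m.sum) ∧
      l = 1 :: (m ++ [-(1 + m.sum)]) := by
  constructor
  · rintro ⟨⟨hlen, hval, hsum⟩, harch, l', rfl, hpos, hnJ⟩
    have hlen' : l'.length = n + 1 := by simpa using hlen
    have hnJ' : l'.sum ≠ 1 ∧ l'.sum ≠ -1 := by
      simp [dyckJ] at hnJ
      omega
    have hs2 : 2 ≤ l'.sum := by omega
    have hv' : CatValidFrom dyckJ 0 l' := ((catValid_append dyckJ l' _ 0).1 hval).1
    have hmem : ∀ x ∈ l', x ∈ dyckJ := by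
      apply steps_mem dyckJ l' 0 hv'
      intro i hi1 hi2
      have := harch i hi1 (by omega)
      rw [List.take_append_of_le_length (by omega)] at this
      omega
    have hne : l' ≠ [] := by intro h; rw [h] at hlen'; simp at hlen'
    obtain ⟨a, m, rfl⟩ := List.exists_cons_of_ne_nil hne
    have ha1 : a = 1 := by
      have h1 := harch 1 le_rfl (by omega)
      simp at h1
      have h := hmem a List.mem_cons_self
      simp [dyckJ] at h
      omega
    subst ha1
    have hml : m.length = n := by simpa using hlen'
    have hms : 1 ≤ m.sum := by
      have : (1 : ℤ) + m.sum = (1 :: m).sum := by simp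
      omega
    have hpm : IsPM m := fun x hx => by
      have h := hmem x (List.mem_cons_of_mem 1 hx)
      simp [dyckJ] at h
      omega
    refine ⟨m, ⟨⟨hpm, ?_⟩, hml, hms⟩, ?_⟩
    · intro i
      rcases le_or_gt i n with hi | hi
      · have := harch (i + 1) (by omega) (by omega)
        rw [List.cons_append, List.take_succ_cons,
          List.take_append_of_le_length (by omega)] at this
        simp only [List.sum_cons] at this
        omega
      · rw [List.take_of_length_le (by omega)]
        omega
    · have : (1 :: m).sum = 1 + m.sum := by simp
      rw [this]
      simp
  · rintro ⟨m, ⟨⟨hpm, hnn⟩, hml, hms⟩, rfl⟩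
    have hls : (1 :: m).sum = 1 + m.sum := by simp
    have key : (1 : ℤ) :: (m ++ [-(1 + m.sum)]) = (1 :: m) ++ [-(1 :: m).sum] := by
      rw [hls]; simp
    have hvm : CatValidFrom dyckJ 0 (1 :: m) := by
      apply catValid_of_mem
      · intro x hx
        rw [List.mem_cons] at hx
        rcases hx with rfl | hx
        · simp [dyckJ]
        · rcases hpm x hx with h | h <;> simp [dyckJ, h]
      · intro i
        cases i with
        | zero => simp
        | succ j =>
          simp only [List.take_succ_cons, List.sum_cons, zero_add]
          have := hnn j
          omega
    refine ⟨⟨?_, ?_, ?_⟩, ?_, ⟨1 :: m, key, by rw [hls]; omega, ?_⟩⟩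
    · simp [hml]
    · rw [key, catValid_append]
      refine ⟨hvm, ?_⟩
      refine ⟨Or.inr ⟨by rw [zero_add], by rw [zero_add, hls]; omega, ?_⟩, trivial⟩
      rw [zero_add, hls]
      simp [dyckJ]
      omega
    · simp
    · intro i hi1 hi2
      obtain ⟨j, rfl⟩ : ∃ j, i = j + 1 := ⟨i - 1, by omega⟩
      rw [List.take_succ_cons, List.take_append_of_le_length (by omega)]
      simp only [List.sum_cons]
      have := hnn j
      omega
    · rw [hls]
      simp [dyckJ]
      omega

lemma aCount_eq_Tcnt (n : ℕ) : aCount (n + 2) = Tcnt n := by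
  rw [aCount, Tcnt]
  apply Nat.card_congr
  apply Equiv.symm
  apply Equiv.ofBijective
    (fun m : {m : List ℤ // (IsPM m ∧ NNP m) ∧ m.length = n ∧ 1 ≤ m.sum} =>
      (⟨1 :: (m.1 ++ [-(1 + m.1.sum)]), (arch_iff n _).2 ⟨m.1, m.2, rfl⟩⟩ :
        {l : List ℤ // DyckCat (n + 2) l ∧ IsArch (n + 2) l ∧ EndsWithCat dyckJ l}))
  constructor
  · rintro x y h
    simp only [Subtype.mk_eq_mk, List.cons.injEq, true_and] at h
    exact Subtype.ext (by simpa using congrArg List.dropLast h)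
  · rintro ⟨l, hl⟩
    obtain ⟨m, hm, rfl⟩ := (arch_iff n l).1 hl
    exact ⟨⟨m, hm⟩, rfl⟩

theorem aCount_succ_succ' (n : ℕ) :
    (aCount (n + 2) : ℤ) =
      n.choose (n / 2) - (if Even n then (catalan (n / 2) : ℤ) else 0) := by
  rw [aCount_eq_Tcnt, Tcnt_eq]

/-- **Dyck arches ending with a catastrophe, via meanders minus excursions.**
For every `n ≥ 0`, `a (n+2) = binomial n ⌊n/2⌋ - [n even] · Catalan (n/2)`. -/
theorem aCount_succ_succ (n : ℕ) :
    (aCount (n + 2) : ℤ) =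
      n.choose (n / 2) - (if Even n then (catalan (n / 2) : ℤ) else 0) := by
  exact aCount_succ_succ' n
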